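/- Let X be a topological space with at least 3 points. If for every x ∈ X the subspace X \ {x} is perfectly normal Hausdorff (T₆), then X is T₆. -/

import Mathlib

theorem t6_reconstructible (X : Type*) [TopologicalSpace X]
    (hcard : 3 ≤ Cardinal.mk X)
    (h : ∀ x : X, T6Space ({x}ᶜ : Set X)) : T6Space X := by
  -- Step 1 : T1
  have hT1 : T1Space X := by
    refine ⟨fun x => ?_⟩
    rw [← closure_subset_iff_isClosed]
    intro w hw
    by_contra hwx
    obtain ⟨y, hyw, hyx⟩ := Cardinal.three_le hcard w x
    haveI := h y
    have hwy : (w : X) ∈ ({y}ᶜ : Set X) := by simp [hyw.symm]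
    have hxy : (x : X) ∈ ({y}ᶜ : Set X) := by simp [hyx.symm]
    have hcl : (⟨w, hwy⟩ : ({y}ᶜ : Set X)) ∈ closure ({⟨x, hxy⟩} : Set ({y}ᶜ : Set X)) := by
      rw [closure_subtype]
      simpa using hw
    rw [closure_singleton] at hcl
    exact hwx (by simpa using congrArg Subtype.val hcl)
  have hopen : ∀ z : X, IsOpen ({z}ᶜ : Set X) := fun z => isOpen_compl_singleton
  -- Step 2 : Normal
  have hNormal : NormalSpace X := by
    refine ⟨fun s t hs ht hst => ?_⟩
    by_cases hcov : (s ∪ t)ᶜ = ∅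
    · -- s and t are complementary clopen sets
      have huniv : s ∪ t = Set.univ := by rwa [Set.compl_empty_iff] at hcov
      have hts : t = sᶜ := by
        ext x
        constructor
        · intro hx hxs
          exact Set.disjoint_left.mp hst hxs hx
        · intro hx
          rcases (huniv ▸ Set.mem_univ x : x ∈ s ∪ t) with h1 | h1
          · exact absurd h1 hx
          · exact h1
      refine ⟨s, t, ?_, ?_, le_rfl, le_rfl, hst⟩
      · have : s = tᶜ := by rw [hts, compl_compl]
        rw [this]; exact ht.isOpen_compl
      · rw [hts]; exact hs.isOpen_compl
    · obtain ⟨z, hz⟩ := Set.nonempty_iff_ne_empty.mpr hcov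
      haveI := h z
      set U : Set X := {z}ᶜ
      have hUopen : IsOpen U := hopen z
      have hsU : s ⊆ U := fun x hx hxz =>
        hz (Set.mem_union_left _ (Set.mem_singleton_iff.mp hxz ▸ hx))
      have htU : t ⊆ U := fun x hx => by
        intro hxz
        rw [Set.mem_singleton_iff] at hxz
        exact hz (Set.mem_union_right _ (hxz ▸ hx))
      have hs' : IsClosed (Subtype.val ⁻¹' s : Set U) := hs.preimage continuous_subtype_val
      have ht' : IsClosed (Subtype.val ⁻¹' t : Set U) := ht.preimage continuous_subtype_val
      have hd' : Disjoint (Subtype.val ⁻¹' s : Set U) (Subtype.val ⁻¹' t) :=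
        hst.preimage _
      obtain ⟨u, v, hu, hv, hsu, htv, huv⟩ := normal_separation hs' ht' hd'
      refine ⟨Subtype.val '' u, Subtype.val '' v,
        hUopen.isOpenEmbedding_subtypeVal.isOpenMap _ hu,
        hUopen.isOpenEmbedding_subtypeVal.isOpenMap _ hv, ?_, ?_, ?_⟩
      · intro x hx
        exact ⟨⟨x, hsU hx⟩, hsu hx, rfl⟩
      · intro x hx
        exact ⟨⟨x, htU hx⟩, htv hx, rfl⟩
      · exact (Set.disjoint_image_iff Subtype.val_injective).mpr huv
  -- Step 3 : closed sets are Gδ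
  refine { toT0Space := inferInstance,
           toPerfectlyNormalSpace := { toNormalSpace := hNormal,
                                       closed_gdelta := fun C hC => ?_ } }
  by_cases hCuniv : Cᶜ = ∅
  · have : C = Set.univ := by rwa [Set.compl_empty_iff] at hCuniv
    exact this ▸ IsGδ.univ
  · obtain ⟨z, hz⟩ := Set.nonempty_iff_ne_empty.mpr hCuniv
    haveI := h z
    set U : Set X := {z}ᶜ
    have hUopen : IsOpen U := hopen z
    have hCU : C ⊆ U := fun x hx hxz => by
      rw [Set.mem_singleton_iff] at hxz
      exact hz (hxz ▸ hx)
    have hC' : IsClosed (Subtype.val ⁻¹' C : Set U) := hC.preimage continuous_subtype_val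
    have hGδ' : IsGδ (Subtype.val ⁻¹' C : Set U) := PerfectlyNormalSpace.closed_gdelta hC'
    obtain ⟨f, hfopen, hfeq⟩ := hGδ'.eq_iInter_nat
    have key : C = ⋂ n, Subtype.val '' f n := by
      ext x
      constructor
      · intro hx
        have : (⟨x, hCU hx⟩ : U) ∈ ⋂ n, f n := by rw [← hfeq]; exact hx
        simp only [Set.mem_iInter] at this ⊢
        exact fun n => ⟨_, this n, rfl⟩
      · intro hx
        simp only [Set.mem_iInter] at hx
        obtain ⟨x0, hx0, hx0eq⟩ := hx 0
        have hxU : x ∈ U := hx0eq ▸ x0.2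
        have : (⟨x, hxU⟩ : U) ∈ ⋂ n, f n := by
          simp only [Set.mem_iInter]
          intro n
          obtain ⟨y, hy, hyeq⟩ := hx n
          have : y = ⟨x, hxU⟩ := Subtype.ext hyeq
          exact this ▸ hy
        rw [← hfeq] at this
        exact this
    rw [key]
    exact IsGδ.iInter_of_isOpen fun n =>
      hUopen.isOpenEmbedding_subtypeVal.isOpenMap _ (hfopen n)
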